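/- An infinite finitely generated group Γ with a non-trivial torsion element has a Cayley graph whose isometry group contains an infinite subgroup; concretely, if F is a non-trivial finite subgroup of Γ and S a finite symmetric generating set, then any permutation of Γ preserving each left coset of F is an isometry of the Cayley graph (Γ, FSF), where FSF = {fsf' : f,f' ∈ F, s ∈ S}. -/

import Mathlib

variable {Γ : Type*} [Group Γ]

/-- Word length of `g` with respect to a generating set `T`. -/
noncomputable def wordLength (T : Set Γ) (g : Γ) : ℕ :=
  sInf {n | ∃ l : List Γ, l.length = n ∧ (∀ x ∈ l, x ∈ T) ∧ l.prod = g}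

lemma wordLength_le_length {T : Set Γ} {g : Γ} {l : List Γ}
    (hl : ∀ x ∈ l, x ∈ T) (hp : l.prod = g) : wordLength T g ≤ l.length :=
  Nat.sInf_le ⟨l, rfl, hl, hp⟩

lemma exists_min_word {T : Set Γ} {g : Γ}
    (hword : ∃ l : List Γ, (∀ x ∈ l, x ∈ T) ∧ l.prod = g) :
    ∃ l : List Γ, l.length = wordLength T g ∧ (∀ x ∈ l, x ∈ T) ∧ l.prod = g := by
  obtain ⟨l, hl, hp⟩ := hword
  have h : {n | ∃ l : List Γ, l.length = n ∧ (∀ x ∈ l, x ∈ T) ∧ l.prod = g}.Nonempty :=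
    ⟨l.length, l, rfl, hl, hp⟩
  exact Nat.sInf_mem h

lemma wordLength_sandwich_le {T : Set Γ} {F : Subgroup Γ}
    (hword : ∀ g : Γ, ∃ l : List Γ, (∀ x ∈ l, x ∈ T) ∧ l.prod = g)
    (hl : ∀ f ∈ F, ∀ t ∈ T, f * t ∈ T) (hr : ∀ f ∈ F, ∀ t ∈ T, t * f ∈ T)
    {a f₁ f₂ : Γ} (hf₁ : f₁ ∈ F) (hf₂ : f₂ ∈ F) (ha : a ≠ 1) :
    wordLength T (f₁ * a * f₂) ≤ wordLength T a := by
  obtain ⟨l, hlen, hmem, hprod⟩ := exists_min_word (hword a)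
  match l, hmem, hprod with
  | [], _, hprod => exact absurd hprod.symm ha
  | t :: l', hmem, hprod =>
    have ht : t ∈ T := hmem t (by simp)
    rcases List.eq_nil_or_concat l' with rfl | ⟨L, u, rfl⟩
    · have : wordLength T (f₁ * a * f₂) ≤ ([f₁ * t * f₂] : List Γ).length := by
        refine wordLength_le_length (fun x hx => ?_) ?_
        · simp only [List.mem_singleton] at hx
          subst hx
          exact hr f₂ hf₂ _ (hl f₁ hf₁ t ht)
        · simp at hprod ⊢
          rw [← hprod]
      simpa [← hlen] using this
    · simp only [List.concat_eq_append] at hmem hprod hlen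
      have hu : u ∈ T := hmem u (by simp)
      have : wordLength T (f₁ * a * f₂) ≤ ((f₁ * t) :: (L ++ [u * f₂])).length := by
        refine wordLength_le_length (fun x hx => ?_) ?_
        · simp only [List.mem_cons, List.mem_append, List.mem_singleton,
            List.not_mem_nil, or_false] at hx
          rcases hx with rfl | hx | rfl
          · exact hl f₁ hf₁ t ht
          · exact hmem x (by simp [hx])
          · exact hr f₂ hf₂ u hu
        · simp only [List.prod_cons, List.prod_append, List.prod_singleton,
            List.prod_nil, mul_one] at hprod ⊢
          rw [← hprod]; group
      simpa [← hlen] using this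

lemma wordLength_sandwich {T : Set Γ} {F : Subgroup Γ}
    (hword : ∀ g : Γ, ∃ l : List Γ, (∀ x ∈ l, x ∈ T) ∧ l.prod = g)
    (hl : ∀ f ∈ F, ∀ t ∈ T, f * t ∈ T) (hr : ∀ f ∈ F, ∀ t ∈ T, t * f ∈ T)
    {a f₁ f₂ : Γ} (hf₁ : f₁ ∈ F) (hf₂ : f₂ ∈ F) (ha : a ≠ 1)
    (hb : f₁ * a * f₂ ≠ 1) :
    wordLength T (f₁ * a * f₂) = wordLength T a := by
  refine le_antisymm (wordLength_sandwich_le hword hl hr hf₁ hf₂ ha) ?_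
  have := wordLength_sandwich_le hword hl hr (F.inv_mem hf₁) (F.inv_mem hf₂) hb
  have e : f₁⁻¹ * (f₁ * a * f₂) * f₂⁻¹ = a := by group
  rwa [e] at this

/-- An infinite finitely generated group `Γ` with a non-trivial finite
subgroup `F` has a Cayley graph with a large isometry group: for the
generating set `FSF = {f s f' : f, f' ∈ F, s ∈ S}`, every permutation of `Γ`
preserving each left coset of `F` is an isometry of the Cayley graph
`(Γ, FSF)`, and there are infinitely many such permutations. -/
theorem cosetPreserving_perm_isometry
    (hΓ : Infinite Γ) (S : Finset Γ) (hsymm : ∀ s ∈ S, s⁻¹ ∈ S)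
    (hgen : Subgroup.closure (S : Set Γ) = ⊤)
    (F : Subgroup Γ) (hFfin : (F : Set Γ).Finite) (hFne : F ≠ ⊥) :
    (∀ σ : Equiv.Perm Γ, (∀ g : Γ, g⁻¹ * σ g ∈ F) →
      ∀ g h : Γ,
        wordLength {x : Γ | ∃ f ∈ F, ∃ s ∈ S, ∃ f' ∈ F, x = f * s * f'}
          ((σ g)⁻¹ * σ h)
        = wordLength {x : Γ | ∃ f ∈ F, ∃ s ∈ S, ∃ f' ∈ F, x = f * s * f'}
          (g⁻¹ * h)) ∧
    Infinite {σ : Equiv.Perm Γ // ∀ g : Γ, g⁻¹ * σ g ∈ F} := by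
  set T : Set Γ := {x : Γ | ∃ f ∈ F, ∃ s ∈ S, ∃ f' ∈ F, x = f * s * f'} with hT
  have hST : (S : Set Γ) ⊆ T := fun s hs =>
    ⟨1, F.one_mem, s, hs, 1, F.one_mem, by group⟩
  have Tsymm : ∀ t ∈ T, t⁻¹ ∈ T := by
    rintro t ⟨f, hf, s, hs, f', hf', rfl⟩
    exact ⟨f'⁻¹, F.inv_mem hf', s⁻¹, hsymm s hs, f⁻¹, F.inv_mem hf, by group⟩
  have hl : ∀ f ∈ F, ∀ t ∈ T, f * t ∈ T := by
    rintro f hf t ⟨f₁, hf₁, s, hs, f₂, hf₂, rfl⟩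
    exact ⟨f * f₁, F.mul_mem hf hf₁, s, hs, f₂, hf₂, by group⟩
  have hr : ∀ f ∈ F, ∀ t ∈ T, t * f ∈ T := by
    rintro f hf t ⟨f₁, hf₁, s, hs, f₂, hf₂, rfl⟩
    exact ⟨f₁, hf₁, s, hs, f₂ * f, F.mul_mem hf₂ hf, by group⟩
  have hword : ∀ g : Γ, ∃ l : List Γ, (∀ x ∈ l, x ∈ T) ∧ l.prod = g := by
    intro g
    have hg : g ∈ Subgroup.closure T := by
      have : Subgroup.closure (S : Set Γ) ≤ Subgroup.closure T :=
        Subgroup.closure_mono hST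
      rw [hgen] at this
      exact this trivial
    have hg' : g ∈ Submonoid.closure (T ∪ T⁻¹) := by
      rw [← Subgroup.closure_toSubmonoid] at *
      exact hg
    obtain ⟨l, hmem, hprod⟩ := Submonoid.exists_list_of_mem_closure hg'
    refine ⟨l, fun x hx => ?_, hprod⟩
    rcases hmem x hx with h | h
    · exact h
    · have := Tsymm _ h
      rwa [inv_inv] at this
  constructor
  · intro σ hσ g h
    by_cases hgh : g = h
    · subst hgh; simp
    · have key : (σ g)⁻¹ * σ h = (g⁻¹ * σ g)⁻¹ * (g⁻¹ * h) * (h⁻¹ * σ h) := by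
        group
      have ha : g⁻¹ * h ≠ 1 := by
        intro h1
        exact hgh (by simpa [inv_mul_eq_one] using h1)
      have hb : (g⁻¹ * σ g)⁻¹ * (g⁻¹ * h) * (h⁻¹ * σ h) ≠ 1 := by
        rw [← key]
        intro h1
        exact hgh (σ.injective (by simpa [inv_mul_eq_one] using h1))
      rw [key]
      exact wordLength_sandwich hword hl hr (F.inv_mem (hσ g)) (hσ h) ha hb
  · -- infinitely many such permutations
    obtain ⟨f, hfF, hf1⟩ : ∃ f, f ∈ F ∧ f ≠ 1 := by
      by_contra hc
      push_neg at hc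
      exact hFne (Subgroup.eq_bot_iff_forall F |>.2 hc)
    have hne : ∀ g : Γ, g * f ≠ g := fun g h1 =>
      hf1 (mul_left_cancel (a := g) (by rw [h1, mul_one]))
    classical
    set e : Γ → {σ : Equiv.Perm Γ // ∀ g : Γ, g⁻¹ * σ g ∈ F} := fun g =>
      ⟨Equiv.swap g (g * f), by
        intro x
        by_cases hx : x = g
        · subst hx; simp [Equiv.swap_apply_left, hfF]
        · by_cases hx' : x = g * f
          · subst hx'
            rw [Equiv.swap_apply_right]
            have : (g * f)⁻¹ * g = f⁻¹ := by group
            rw [this]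
            exact F.inv_mem hfF
          · rw [Equiv.swap_apply_of_ne_of_ne hx hx']
            simp [F.one_mem]⟩ with he
    refine ⟨fun hfin => ?_⟩
    have hfibers : ∀ g : Γ, e ⁻¹' {e g} ⊆ {g, g * f} := by
      intro g x hx
      simp only [Set.mem_preimage, Set.mem_singleton_iff] at hx
      by_contra hcon
      simp only [Set.mem_insert_iff, Set.mem_singleton_iff, not_or] at hcon
      have h1 : (e x : Equiv.Perm Γ) x = x * f := by
        simp [he, Equiv.swap_apply_left]
      have h2 : (e g : Equiv.Perm Γ) x = x :=
        Equiv.swap_apply_of_ne_of_ne hcon.1 hcon.2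
      rw [hx] at h1
      rw [h2] at h1
      exact hne x h1.symm
    haveI := hfin
    have hrange : (Set.range e).Finite := Set.toFinite _
    have huniv : (Set.univ : Set Γ) ⊆ ⋃ σ ∈ Set.range e, e ⁻¹' {σ} := by
      intro g _
      exact Set.mem_biUnion (Set.mem_range_self g) rfl
    have hfin2 : (⋃ σ ∈ Set.range e, e ⁻¹' {σ}) |>.Finite := by
      refine hrange.biUnion ?_
      rintro σ ⟨g, rfl⟩
      exact Set.Finite.subset ((Set.finite_singleton _).insert _) (hfibers g)
    have : (Set.univ : Set Γ).Finite := hfin2.subset huniv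
    exact Set.infinite_univ this
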